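/- Let 1 < λ < 3. Suppose f is analytic on the open unit disk D with f(0) = 0, f'(0) = 1, and Re(1 + z f''(z)/f'(z)) < (5λ−1)/(2(λ+1)) when 1 < λ ≤ 2, and Re(1 + z f''(z)/f'(z)) < (λ+1)/(2(λ−1)) when 2 < λ < 3, for all z ∈ D. Then z f'(z)/f(z) is subordinate to λ(1−z)/(λ−z) on D. -/

import Mathlib

open Complex Metric Filter Topology

lemma aux_deriv_ge {v : ℝ → ℝ} {d : ℝ} (hv : HasDerivAt v d 1) (h1 : v 1 = 1)
    (hle : ∀ t : ℝ, 0 ≤ t → t < 1 → v t ≤ t ^ 2) : 2 ≤ d := by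
  have hs : Tendsto (slope v 1) (𝓝[<] (1:ℝ)) (𝓝 d) :=
    (hasDerivAt_iff_tendsto_slope.mp hv).mono_left
      (nhdsWithin_mono 1 (fun x hx => ne_of_lt hx))
  have h2 : Tendsto (fun t : ℝ => t + 1) (𝓝[<] (1:ℝ)) (𝓝 2) := by
    have h3 : Tendsto (fun t : ℝ => t + 1) (𝓝 (1:ℝ)) (𝓝 (1+1)) :=
      (continuous_id.add continuous_const).tendsto 1
    norm_num at h3
    exact h3.mono_left nhdsWithin_le_nhds
  refine le_of_tendsto_of_tendsto h2 hs ?_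
  filter_upwards [Ioo_mem_nhdsLT_of_mem (by norm_num : (1:ℝ) ∈ Set.Ioc 0 1)] with t ht
  obtain ⟨ht0, ht1⟩ := ht
  have hvt := hle t ht0.le ht1
  rw [slope_def_field, h1, le_div_iff_of_neg (by linarith : t - 1 < 0)]
  nlinarith

lemma jack {w : ℂ → ℂ} {U : Set ℂ} (hU : IsOpen U) (hw : DifferentiableOn ℂ w U)
    {r : ℝ} (hr : 0 < r) (hsub : closedBall 0 r ⊆ U) (hw0 : w 0 = 0)
    {z₀ : ℂ} (hz₀ : ‖z₀‖ = r)
    (hlt : ∀ z : ℂ, ‖z‖ < r → ‖w z‖ < 1)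
    (hle : ∀ z : ℂ, ‖z‖ ≤ r → ‖w z‖ ≤ 1)
    (hwz₀ : ‖w z₀‖ = 1) :
    ∃ K : ℝ, 1 ≤ K ∧ z₀ * deriv w z₀ = K * w z₀ := by
  have hball : ball (0:ℂ) r ⊆ U := ball_subset_closedBall.trans hsub
  have hd : DifferentiableOn ℂ w (ball 0 r) := hw.mono hball
  have hmaps : Set.MapsTo w (ball (0:ℂ) r) (ball (w 0) 1) := by
    intro z hz
    rw [hw0, mem_ball_zero_iff]
    exact hlt z (mem_ball_zero_iff.mp hz)
  have hschwarz : ∀ z : ℂ, ‖z‖ < r → ‖w z‖ ≤ ‖z‖ / r := by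
    intro z hz
    have := Complex.dist_le_div_mul_dist_of_mapsTo_ball hd (hmaps.mono_right ball_subset_closedBall) (mem_ball_zero_iff.mpr hz)
    rw [hw0] at this
    simpa [dist_zero_right, div_mul_eq_mul_div, mul_comm, div_eq_inv_mul] using this
  have hz₀U : z₀ ∈ U := hsub (by simp [mem_closedBall_zero_iff, hz₀])
  have hdiff : DifferentiableAt ℂ w z₀ := (hw.differentiableAt (hU.mem_nhds hz₀U))
  set d := deriv w z₀ with hd_def
  have hd' : HasDerivAt w d z₀ := hdiff.hasDerivAt
  set a := w z₀ with ha_def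
  set ζ := d * z₀ with hζ_def
  have habs : ‖a‖ = 1 := by exact hwz₀
  have hnormSq1 : a.re ^ 2 + a.im ^ 2 = 1 := by
    have h := Complex.sq_norm a
    rw [habs, Complex.normSq_apply] at h
    nlinarith [h]
  have hinner : HasDerivAt (fun t : ℝ => (t:ℂ) * z₀) z₀ 1 := by
    simpa using ((hasDerivAt_id ((1:ℝ):ℂ)).mul_const z₀).comp_ofReal
  have hh : HasDerivAt (fun t : ℝ => w ((t:ℂ) * z₀)) ζ 1 := by
    have h0 : HasDerivAt w d (((1:ℝ):ℂ) * z₀) := by simpa using hd'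
    exact h0.comp 1 hinner
  have hre : HasDerivAt (fun t : ℝ => (w ((t:ℂ) * z₀)).re) (ζ.re) 1 :=
    Complex.reCLM.hasFDerivAt.comp_hasDerivAt 1 hh
  have him : HasDerivAt (fun t : ℝ => (w ((t:ℂ) * z₀)).im) (ζ.im) 1 :=
    Complex.imCLM.hasFDerivAt.comp_hasDerivAt 1 hh
  have hv : HasDerivAt (fun t : ℝ => (w ((t:ℂ) * z₀)).re ^ 2 + (w ((t:ℂ) * z₀)).im ^ 2)
      (2 * a.re * ζ.re + 2 * a.im * ζ.im) 1 := by
    have := (hre.pow 2).add (him.pow 2)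
    simpa [ha_def, Pi.add_def, Pi.pow_def] using this
  have hK1 : 1 ≤ a.re * ζ.re + a.im * ζ.im := by
    have h2d : 2 ≤ 2 * a.re * ζ.re + 2 * a.im * ζ.im := by
      refine aux_deriv_ge hv ?_ ?_
      · simpa [ha_def] using hnormSq1
      · intro t ht0 ht1
        have hn : ‖(t:ℂ) * z₀‖ = t * r := by
          simp [norm_mul, hz₀, _root_.abs_of_nonneg ht0]
        have h1 : ‖w ((t:ℂ) * z₀)‖ ≤ t := by
          have := hschwarz ((t:ℂ) * z₀) (by rw [hn]; nlinarith)
          rw [hn] at this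
          calc ‖w ((t:ℂ) * z₀)‖ ≤ t * r / r := this
          _ = t := by field_simp
        have h2 : Complex.normSq (w ((t:ℂ)*z₀)) ≤ t^2 := by
          rw [← Complex.sq_norm]
          nlinarith [norm_nonneg (w ((t:ℂ)*z₀))]
        rw [Complex.normSq_apply] at h2
        nlinarith [h2]
    linarith
  have hinner2 : HasDerivAt (fun θ : ℝ => Complex.exp ((θ:ℂ) * I) * z₀) (I * z₀) 0 := by
    have h0 := ((((hasDerivAt_id (((0:ℝ):ℂ))).mul_const I).cexp).mul_const z₀).comp_ofReal
    simpa using h0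
  have hm : HasDerivAt (fun θ : ℝ => w (Complex.exp ((θ:ℂ) * I) * z₀)) (d * (I * z₀)) 0 := by
    have h0 : HasDerivAt w d (Complex.exp (((0:ℝ):ℂ) * I) * z₀) := by simpa using hd'
    exact h0.comp 0 hinner2
  set η := d * (I * z₀) with hη_def
  have hmre : HasDerivAt (fun θ : ℝ => (w (Complex.exp ((θ:ℂ) * I) * z₀)).re) (η.re) 0 :=
    Complex.reCLM.hasFDerivAt.comp_hasDerivAt 0 hm
  have hmim : HasDerivAt (fun θ : ℝ => (w (Complex.exp ((θ:ℂ) * I) * z₀)).im) (η.im) 0 :=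
    Complex.imCLM.hasFDerivAt.comp_hasDerivAt 0 hm
  have hmv : HasDerivAt (fun θ : ℝ => (w (Complex.exp ((θ:ℂ) * I) * z₀)).re ^ 2
      + (w (Complex.exp ((θ:ℂ) * I) * z₀)).im ^ 2)
      (2 * a.re * η.re + 2 * a.im * η.im) 0 := by
    have := (hmre.pow 2).add (hmim.pow 2)
    simpa [ha_def, Pi.add_def, Pi.pow_def] using this
  have hmax : IsLocalMax (fun θ : ℝ => (w (Complex.exp ((θ:ℂ) * I) * z₀)).re ^ 2
      + (w (Complex.exp ((θ:ℂ) * I) * z₀)).im ^ 2) 0 := by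
    apply Filter.Eventually.of_forall
    intro θ
    have hnorm : ‖Complex.exp ((θ:ℂ) * I) * z₀‖ = r := by
      simp [norm_mul, Complex.norm_exp, hz₀]
    have h1 : ‖w (Complex.exp ((θ:ℂ) * I) * z₀)‖ ≤ 1 := hle _ hnorm.le
    have h2 : Complex.normSq (w (Complex.exp ((θ:ℂ)*I)*z₀)) ≤ 1 := by
      rw [← Complex.sq_norm]
      nlinarith [norm_nonneg (w (Complex.exp ((θ:ℂ)*I)*z₀))]
    rw [Complex.normSq_apply] at h2
    simp only
    simp [ha_def]
    nlinarith [h2, hnormSq1]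
  have hzero : 2 * a.re * η.re + 2 * a.im * η.im = 0 := hmax.hasDerivAt_eq_zero hmv
  have hηζ : η = I * ζ := by rw [hη_def, hζ_def]; ring
  have hηre : η.re = -ζ.im := by rw [hηζ]; simp
  have hηim : η.im = ζ.re := by rw [hηζ]; simp
  rw [hηre, hηim] at hzero
  set K := a.re * ζ.re + a.im * ζ.im with hK_def
  refine ⟨K, hK1, ?_⟩
  have hz₀d : z₀ * d = ζ := by rw [hζ_def]; ring
  have e1 : ζ.re = K * a.re := by
    rw [hK_def]; linear_combination (-ζ.re) * hnormSq1 + (a.im/2) * hzero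
  have e2 : ζ.im = K * a.im := by
    rw [hK_def]; linear_combination (-ζ.im) * hnormSq1 + (-a.re/2) * hzero
  rw [hz₀d]
  apply Complex.ext
  · rw [Complex.re_ofReal_mul]; exact e1
  · rw [Complex.im_ofReal_mul]; exact e2

lemma key_lower (lam K : ℝ) (u : ℂ) (h1 : 1 < lam) (h3 : lam < 3)
    (hu : Complex.normSq u = 1) (hu1 : u ≠ 1) (hK : 1 ≤ K) (alpha : ℝ)
    (halpha : (lam ≤ 2 ∧ alpha = (5*lam-1)/(2*(lam+1))) ∨
      (2 < lam ∧ alpha = (lam+1)/(2*(lam-1)))) :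
    alpha ≤ ((((lam:ℂ))*(1-u)^2 + (K:ℂ)*u*(1-(lam:ℂ))) / ((((lam:ℂ))-u)*(1-u))).re := by
  set x := u.re with hx_def
  set y := u.im with hy_def
  have hxy : x^2 + y^2 = 1 := by
    rw [Complex.normSq_apply] at hu; nlinarith [hu]
  have hxle : -1 ≤ x ∧ x ≤ 1 := by constructor <;> nlinarith [sq_nonneg y]
  have hx1 : x < 1 := by
    rcases lt_or_eq_of_le hxle.2 with h | h
    · exact h
    · exfalso; apply hu1
      have hy0 : y = 0 := by nlinarith
      apply Complex.ext <;> simp [← hx_def, ← hy_def, ← h, hy0]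
  have hN : 0 < lam^2 - 2*lam*x + 1 := by nlinarith [sq_nonneg (lam - 1)]
  set n := ((lam:ℂ))*(1-u)^2 + (K:ℂ)*u*(1-(lam:ℂ)) with hn_def
  set dd := (((lam:ℂ))-u)*(1-u) with hdd_def
  have hnre : n.re = lam*((1-x)^2 - y^2) + K*(x*(1-lam)) := by
    simp [hn_def, Complex.mul_re, Complex.mul_im, Complex.sub_re, Complex.sub_im,
      Complex.one_re, Complex.one_im, Complex.ofReal_re, Complex.ofReal_im, pow_two,
      ← hx_def, ← hy_def]
    ring
  have hnim : n.im = lam*(-(2*(1-x)*y)) + K*(y*(1-lam)) := by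
    simp [hn_def, Complex.mul_re, Complex.mul_im, Complex.sub_re, Complex.sub_im,
      Complex.one_re, Complex.one_im, Complex.ofReal_re, Complex.ofReal_im, pow_two,
      ← hx_def, ← hy_def]
    ring
  have hddre : dd.re = (lam-x)*(1-x) - y^2 := by
    simp [hdd_def, Complex.mul_re, Complex.sub_re, Complex.sub_im,
      Complex.one_re, Complex.one_im, Complex.ofReal_re, Complex.ofReal_im, pow_two,
      ← hx_def, ← hy_def]
  have hddim : dd.im = -((lam-x)*y) - (1-x)*y := by
    simp [hdd_def, Complex.mul_im, Complex.sub_re, Complex.sub_im,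
      Complex.one_re, Complex.one_im, Complex.ofReal_re, Complex.ofReal_im,
      ← hx_def, ← hy_def]
    ring
  have e2 : Complex.normSq dd = 2*(lam^2 - 2*lam*x + 1)*(1-x) := by
    rw [Complex.normSq_apply, hddre, hddim]
    linear_combination (2 + y^2 - 2*x + x^2 - 2*lam*x + lam^2) * hxy
  have e1 : n.re * dd.re + n.im * dd.im
      = (1-x)*(2*lam*(lam+1)*(1-x) + K*(lam^2-1)) := by
    rw [hnre, hnim, hddre, hddim]
    linear_combination (-K + x*K + 2*lam + lam*y^2 - 3*lam*x - lam*x*K + lam*x^2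
      + lam^2 + lam^2*K - lam^2*x) * hxy
  have hdiv : (n / dd).re = (2*lam*(lam+1)*(1-x) + K*(lam^2-1)) / (2*(lam^2-2*lam*x+1)) := by
    rw [Complex.div_re, ← add_div, e1, e2]
    rw [mul_comm (2*(lam^2 - 2*lam*x + 1)) (1-x), ← mul_div_mul_left
      (2*lam*(lam+1)*(1-x) + K*(lam^2-1)) (2*(lam^2-2*lam*x+1)) (by linarith : (1:ℝ)-x ≠ 0)]
  rw [hdiv]
  rw [le_div_iff₀ (by positivity)]
  rcases halpha with ⟨hl2, ha⟩ | ⟨hl2, ha⟩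
  · rw [ha, div_mul_eq_mul_div, div_le_iff₀ (by linarith : (0:ℝ) < 2*(lam+1))]
    have hid : (2*lam*(lam+1)*(1-x) + K*(lam^2-1)) * (2*(lam+1))
        - (5*lam-1) * (2*(lam^2-2*lam*x+1) * 1)
        = 2*(2*lam*(2-lam)*(lam-1)*(1+x)) + 2*((K-1)*((lam+1)*(lam^2-1))) := by ring
    have hn1 : (0:ℝ) ≤ 2*lam*(2-lam)*(lam-1)*(1+x) :=
      mul_nonneg (mul_nonneg (mul_nonneg (by linarith) (by linarith)) (by linarith))
        (by linarith [hxle.1])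
    have hn2 : (0:ℝ) ≤ (K-1)*((lam+1)*(lam^2-1)) := by
      apply mul_nonneg
      · linarith
      · apply mul_nonneg
        · linarith
        · nlinarith
    linarith [hid, hn1, hn2]
  · rw [ha, div_mul_eq_mul_div, div_le_iff₀ (by linarith : (0:ℝ) < 2*(lam-1))]
    have hid : (2*lam*(lam+1)*(1-x) + K*(lam^2-1)) * (2*(lam-1))
        - (lam+1) * (2*(lam^2-2*lam*x+1) * 1)
        = 2*(2*lam*(lam-2)*(lam+1)*(1-x)) + 2*((K-1)*((lam-1)*(lam^2-1))) := by ring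
    have hn1 : (0:ℝ) ≤ 2*lam*(lam-2)*(lam+1)*(1-x) :=
      mul_nonneg (mul_nonneg (mul_nonneg (by linarith) (by linarith)) (by linarith))
        (by linarith)
    have hn2 : (0:ℝ) ≤ (K-1)*((lam-1)*(lam^2-1)) := by
      apply mul_nonneg
      · linarith
      · apply mul_nonneg
        · linarith
        · nlinarith
    linarith [hid, hn1, hn2]

lemma aux_alg (lam K : ℝ) (u P zD : ℂ) (hlam1 : 1 < lam)
    (hP0 : P ≠ 0) (hlu : (lam:ℂ) - u ≠ 0) (h1u : (1:ℂ) - u ≠ 0)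
    (hP : P = (lam:ℂ)*(1-u)/((lam:ℂ)-u))
    (hzD : zD * ((lam:ℂ)*(1-(lam:ℂ))) = K*u*(P-(lam:ℂ))^2) :
    P + zD / P = ((lam:ℂ)*(1-u)^2 + (K:ℂ)*u*(1-(lam:ℂ))) / (((lam:ℂ)-u)*(1-u)) := by
  have hl0 : (lam:ℂ) ≠ 0 := by
    simp only [ne_eq, Complex.ofReal_eq_zero]
    · exact_mod_cast (by linarith : lam ≠ 0)
  have h1l : (1:ℂ) - (lam:ℂ) ≠ 0 := by
    intro h
    rw [sub_eq_zero] at h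
    have : (1:ℝ) = lam := by exact_mod_cast h
    linarith
  subst hP
  field_simp at hzD
  have hzD2 : zD = K*u*((lam:ℂ)*(1-(lam:ℂ))) / (((lam:ℂ)-u)^2) := by
    rw [eq_div_iff (pow_ne_zero 2 hlu)]
    apply mul_left_cancel₀ (mul_ne_zero hl0 h1l)
    ring_nf
    ring_nf at hzD
    linear_combination (lam:ℂ) * hzD
  subst hzD2
  field_simp

lemma aux_normSq_identity (lam : ℝ) (c : ℂ) :
    Complex.normSq ((lam:ℂ)*(c-1)) - Complex.normSq (c - (lam:ℂ))
      = (lam-1)*((lam+1)*Complex.normSq c - 2*lam*c.re) := by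
  simp only [Complex.normSq_apply, Complex.mul_re, Complex.mul_im, Complex.sub_re,
    Complex.sub_im, Complex.ofReal_re, Complex.ofReal_im, Complex.one_re, Complex.one_im]
  ring

lemma aux_div_norm_lt {a b : ℂ} (hb : b ≠ 0) (h : Complex.normSq a < Complex.normSq b) :
    ‖a/b‖ < 1 := by
  rw [norm_div, div_lt_one (norm_pos_iff.mpr hb), Complex.norm_def, Complex.norm_def]
  exact Real.sqrt_lt_sqrt (Complex.normSq_nonneg a) h

lemma aux_div_norm_le {a b : ℂ} (hb : b ≠ 0) (h : Complex.normSq a ≤ Complex.normSq b) :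
    ‖a/b‖ ≤ 1 := by
  rw [norm_div, div_le_one (norm_pos_iff.mpr hb), Complex.norm_def, Complex.norm_def]
  exact Real.sqrt_le_sqrt h

lemma aux_div_norm_eq {a b : ℂ} (hb : b ≠ 0) (h : Complex.normSq a = Complex.normSq b) :
    ‖a/b‖ = 1 := by
  have habs : ‖a‖ = ‖b‖ := by
    rw [Complex.norm_def, Complex.norm_def, h]
  rw [norm_div, habs, div_self]
  exact norm_ne_zero_iff.mpr hb

lemma aux_inv (lam : ℝ) (P : ℂ) (hlam1 : 1 < lam) (hP : P ≠ (lam:ℂ)) :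
    (lam:ℂ)*(1 - (lam:ℂ)*(P-1)/(P-(lam:ℂ))) / ((lam:ℂ) - (lam:ℂ)*(P-1)/(P-(lam:ℂ))) = P := by
  have hl0 : (lam:ℂ) ≠ 0 := by
    simp only [ne_eq, Complex.ofReal_eq_zero]
    exact_mod_cast (by linarith : lam ≠ 0)
  have h1l : (1:ℂ) - (lam:ℂ) ≠ 0 := by
    intro h
    rw [sub_eq_zero] at h
    have : (1:ℝ) = lam := by exact_mod_cast h
    linarith
  have hPl : P - (lam:ℂ) ≠ 0 := sub_ne_zero.mpr hP
  have hden : (lam:ℂ) - (lam:ℂ)*(P-1)/(P-(lam:ℂ)) = (lam:ℂ)*(1-(lam:ℂ))/(P-(lam:ℂ)) := by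
    field_simp
    ring
  have hnum : (1:ℂ) - (lam:ℂ)*(P-1)/(P-(lam:ℂ)) = P*(1-(lam:ℂ))/(P-(lam:ℂ)) := by
    field_simp
    ring
  have hdne : (lam:ℂ) - (lam:ℂ)*(P-1)/(P-(lam:ℂ)) ≠ 0 := by
    rw [hden]; exact div_ne_zero (mul_ne_zero hl0 h1l) hPl
  rw [div_eq_iff hdne]
  field_simp
  ring

theorem stmt_8 (lam : ℝ) (hlam1 : 1 < lam) (hlam3 : lam < 3)
    (f : ℂ → ℂ) (hf : DifferentiableOn ℂ f (ball 0 1))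
    (hf0 : f 0 = 0) (hf'0 : deriv f 0 = 1)
    (hfne : ∀ z ∈ ball (0:ℂ) 1, z ≠ 0 → f z ≠ 0)
    (hf'ne : ∀ z ∈ ball (0:ℂ) 1, z ≠ 0 → deriv f z ≠ 0)
    (hre1 : lam ≤ 2 → ∀ z ∈ ball (0:ℂ) 1,
      (1 + z * deriv (deriv f) z / deriv f z).re < (5 * lam - 1) / (2 * (lam + 1)))
    (hre2 : 2 < lam → ∀ z ∈ ball (0:ℂ) 1,
      (1 + z * deriv (deriv f) z / deriv f z).re < (lam + 1) / (2 * (lam - 1))) :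
    ∃ w : ℂ → ℂ, DifferentiableOn ℂ w (ball 0 1) ∧ w 0 = 0 ∧
      (∀ z ∈ ball (0:ℂ) 1, w z ∈ ball (0:ℂ) 1) ∧
      ∀ z ∈ ball (0:ℂ) 1, z ≠ 0 →
        z * deriv f z / f z = (lam : ℂ) * (1 - w z) / ((lam : ℂ) - w z) := by
  have h0B : (0:ℂ) ∈ ball (0:ℂ) 1 := by simp
  have hl0 : (lam:ℂ) ≠ 0 := by
    simp only [ne_eq, Complex.ofReal_eq_zero]
    exact_mod_cast (by linarith : lam ≠ 0)
  have h1l : (1:ℂ) - (lam:ℂ) ≠ 0 := by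
    intro h
    rw [sub_eq_zero] at h
    have : (1:ℝ) = lam := by exact_mod_cast h
    linarith
  have han : AnalyticOnNhd ℂ f (ball 0 1) := (analyticOnNhd_iff_differentiableOn isOpen_ball).mpr hf
  have hf' : DifferentiableOn ℂ (deriv f) (ball 0 1) := (han.deriv).differentiableOn
  have hf'ne0 : ∀ z ∈ ball (0:ℂ) 1, deriv f z ≠ 0 := by
    intro z hz
    rcases eq_or_ne z 0 with rfl | hz0
    · rw [hf'0]; exact one_ne_zero
    · exact hf'ne z hz hz0
  set g : ℂ → ℂ := dslope f 0 with hg_def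
  have hg : DifferentiableOn ℂ g (ball 0 1) :=
    (Complex.differentiableOn_dslope (isOpen_ball.mem_nhds h0B)).mpr hf
  have hg0 : g 0 = 1 := by rw [hg_def, dslope_same, hf'0]
  have hfg : ∀ z ∈ ball (0:ℂ) 1, f z = z * g z := by
    intro z hz
    rcases eq_or_ne z 0 with rfl | hz0
    · simp [hf0]
    · rw [hg_def, dslope_of_ne f hz0, slope_def_field, hf0]
      field_simp
      ring
  have hgne : ∀ z ∈ ball (0:ℂ) 1, g z ≠ 0 := by
    intro z hz
    rcases eq_or_ne z 0 with rfl | hz0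
    · rw [hg0]; exact one_ne_zero
    · intro h
      exact hfne z hz hz0 (by rw [hfg z hz, h, mul_zero])
  set p : ℂ → ℂ := fun z => deriv f z / g z with hp_def
  have hp : DifferentiableOn ℂ p (ball 0 1) := hf'.div hg hgne
  have hp0 : p 0 = 1 := by rw [hp_def]; simp [hf'0, hg0]
  have hpne : ∀ z ∈ ball (0:ℂ) 1, p z ≠ 0 := fun z hz =>
    div_ne_zero (hf'ne0 z hz) (hgne z hz)
  have hpval : ∀ z ∈ ball (0:ℂ) 1, z ≠ 0 → z * deriv f z / f z = p z := by
    intro z hz hz0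
    rw [hfg z hz, hp_def]
    field_simp [hgne z hz]
  have hzg : ∀ z ∈ ball (0:ℂ) 1, z * deriv g z = deriv f z - g z := by
    intro z hz
    have hev : f =ᶠ[𝓝 z] fun w => w * g w :=
      Filter.eventuallyEq_of_mem (isOpen_ball.mem_nhds hz) hfg
    have hgd : DifferentiableAt ℂ g z := hg.differentiableAt (isOpen_ball.mem_nhds hz)
    have : deriv f z = deriv (fun w => w * g w) z := hev.deriv_eq
    rw [deriv_fun_mul (c := fun w => w) differentiableAt_id hgd] at this
    simp at this
    rw [this]; ring
  have hq : ∀ z ∈ ball (0:ℂ) 1,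
      (1 + z * deriv (deriv f) z / deriv f z) = p z + z * deriv p z / p z := by
    intro z hz
    have hgd : DifferentiableAt ℂ g z := hg.differentiableAt (isOpen_ball.mem_nhds hz)
    have hfd' : DifferentiableAt ℂ (deriv f) z := hf'.differentiableAt (isOpen_ball.mem_nhds hz)
    have hdp : deriv p z = (deriv (deriv f) z * g z - deriv f z * deriv g z) / (g z)^2 := by
      rw [hp_def]
      exact deriv_div hfd' hgd (hgne z hz)
    rw [hdp, hp_def]
    have h1 := hzg z hz
    have h2 := hgne z hz
    have h3 := hf'ne0 z hz
    field_simp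
    linear_combination (deriv f z) * h1
  -- the hypothesis, packaged
  obtain ⟨alpha, halpha, hqlt⟩ : ∃ alpha : ℝ,
      ((lam ≤ 2 ∧ alpha = (5*lam-1)/(2*(lam+1))) ∨ (2 < lam ∧ alpha = (lam+1)/(2*(lam-1)))) ∧
      ∀ z ∈ ball (0:ℂ) 1, (1 + z * deriv (deriv f) z / deriv f z).re < alpha := by
    rcases le_or_gt lam 2 with h | h
    · exact ⟨_, Or.inl ⟨h, rfl⟩, hre1 h⟩
    · exact ⟨_, Or.inr ⟨h, rfl⟩, hre2 h⟩
  -- main claim: p stays in the disk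
  set expr : ℂ → ℝ := fun z => (lam+1) * Complex.normSq (p z) - 2*lam*(p z).re with hexpr_def
  have hpc : ContinuousOn p (ball 0 1) := hp.continuousOn
  have hexprC : ContinuousOn expr (ball 0 1) := by
    rw [hexpr_def]
    exact (continuousOn_const.mul (Complex.continuous_normSq.comp_continuousOn hpc)).sub
      (continuousOn_const.mul (Complex.continuous_re.comp_continuousOn hpc))
  have hexpr0lt : expr 0 < 0 := by
    rw [hexpr_def]; simp [hp0]; nlinarith
  have hEneg : ∀ z ∈ ball (0:ℂ) 1, expr z < 0 := by
    by_contra hcon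
    push_neg at hcon
    obtain ⟨z₁, hz₁B, hz₁⟩ := hcon
    have hr₁ : ‖z₁‖ < 1 := mem_ball_zero_iff.mp hz₁B
    have hsubB : closedBall (0:ℂ) ‖z₁‖ ⊆ ball 0 1 := closedBall_subset_ball hr₁
    set Kset : Set ℂ := closedBall (0:ℂ) ‖z₁‖ ∩ expr ⁻¹' (Set.Ici 0) with hKset_def
    have hKcl : IsClosed Kset :=
      (hexprC.mono hsubB).preimage_isClosed_of_isClosed Metric.isClosed_closedBall isClosed_Ici
    have hKcp : IsCompact Kset :=
      (isCompact_closedBall (0:ℂ) ‖z₁‖).of_isClosed_subset hKcl Set.inter_subset_left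
    have hz₁K : z₁ ∈ Kset := ⟨mem_closedBall_zero_iff.mpr le_rfl, hz₁⟩
    obtain ⟨z₀, hz₀K, hz₀min⟩ :=
      hKcp.exists_isMinOn ⟨z₁, hz₁K⟩ continuous_norm.continuousOn
    have hz₀r₁ : ‖z₀‖ ≤ ‖z₁‖ := mem_closedBall_zero_iff.mp hz₀K.1
    have hz₀B : z₀ ∈ ball (0:ℂ) 1 := mem_ball_zero_iff.mpr (lt_of_le_of_lt hz₀r₁ hr₁)
    have hz₀E : 0 ≤ expr z₀ := hz₀K.2
    have hr_min : ∀ z ∈ ball (0:ℂ) 1, 0 ≤ expr z → ‖z₀‖ ≤ ‖z‖ := by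
      intro z hz hze
      by_cases h : ‖z‖ ≤ ‖z₁‖
      · exact hz₀min ⟨mem_closedBall_zero_iff.mpr h, hze⟩
      · push_neg at h; linarith
    have hr0 : 0 < ‖z₀‖ := by
      rcases eq_or_lt_of_le (norm_nonneg z₀) with h | h
      · exfalso
        have hz00 : z₀ = 0 := norm_eq_zero.mp h.symm
        rw [hz00] at hz₀E
        linarith
      · exact h
    have hlt_in : ∀ z : ℂ, ‖z‖ < ‖z₀‖ → expr z < 0 := by
      intro z hz
      have hzB : z ∈ ball (0:ℂ) 1 := mem_ball_zero_iff.mpr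
        (lt_of_lt_of_le hz (le_trans hz₀r₁ hr₁.le))
      by_contra h
      push_neg at h
      exact absurd (hr_min z hzB h) (not_le.mpr hz)
    have hle_bd : ∀ z : ℂ, ‖z‖ ≤ ‖z₀‖ → expr z ≤ 0 := by
      intro z hz
      rcases lt_or_eq_of_le hz with h | h
      · exact (hlt_in z h).le
      · have hzB : z ∈ ball (0:ℂ) 1 := mem_ball_zero_iff.mpr
          (lt_of_le_of_lt hz (lt_of_le_of_lt hz₀r₁ hr₁))
        have h1 : Tendsto (fun t : ℝ => (t:ℂ)*z) (𝓝[<] (1:ℝ)) (𝓝 z) := by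
          have hc : Continuous (fun t : ℝ => (t:ℂ)*z) :=
            Complex.continuous_ofReal.mul continuous_const
          have h2 := hc.tendsto (1:ℝ)
          simp only [Complex.ofReal_one, one_mul] at h2
          exact h2.mono_left nhdsWithin_le_nhds
        have htend : Tendsto (fun t : ℝ => expr ((t:ℂ)*z)) (𝓝[<] (1:ℝ)) (𝓝 (expr z)) :=
          ((hexprC.continuousAt (isOpen_ball.mem_nhds hzB)).tendsto).comp h1
        apply le_of_tendsto htend
        filter_upwards [Ioo_mem_nhdsLT_of_mem (by norm_num : (1:ℝ) ∈ Set.Ioc 0 1)] with t ht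
        apply (hlt_in _ _).le
        rw [norm_mul, Complex.norm_real, Real.norm_eq_abs, _root_.abs_of_nonneg ht.1.le, h]
        nlinarith [ht.2, hr0]
    have hexpr00 : expr z₀ = 0 := le_antisymm (hle_bd z₀ le_rfl) hz₀E
    -- the function W
    have hpne_lam : ∀ z : ℂ, ‖z‖ ≤ ‖z₀‖ → p z ≠ (lam:ℂ) := by
      intro z hz h
      have := hle_bd z hz
      rw [hexpr_def] at this
      simp only [h, Complex.normSq_ofReal, Complex.ofReal_re] at this
      nlinarith [mul_pos (mul_pos (show (0:ℝ)<lam by linarith) (show (0:ℝ)<lam by linarith))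
        (show (0:ℝ)<lam-1 by linarith)]
    set U : Set ℂ := ball (0:ℂ) 1 ∩ p ⁻¹' {(lam:ℂ)}ᶜ with hU_def
    have hUopen : IsOpen U := hpc.isOpen_inter_preimage isOpen_ball isOpen_compl_singleton
    have hsubU : closedBall (0:ℂ) ‖z₀‖ ⊆ U := by
      intro z hz
      have hzn : ‖z‖ ≤ ‖z₀‖ := mem_closedBall_zero_iff.mp hz
      exact ⟨mem_ball_zero_iff.mpr (lt_of_le_of_lt hzn (lt_of_le_of_lt hz₀r₁ hr₁)),
        hpne_lam z hzn⟩
    set W : ℂ → ℂ := fun z => (lam:ℂ)*(p z - 1) / (p z - (lam:ℂ)) with hW_def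
    have hWdiff : DifferentiableOn ℂ W U := by
      apply DifferentiableOn.div
      · exact ((hp.mono Set.inter_subset_left).sub_const 1).const_mul _
      · exact (hp.mono Set.inter_subset_left).sub_const _
      · exact fun z hz => sub_ne_zero.mpr hz.2
    have hW0 : W 0 = 0 := by rw [hW_def]; simp [hp0]
    have hWlt : ∀ z : ℂ, ‖z‖ < ‖z₀‖ → ‖W z‖ < 1 := by
      intro z hz
      apply aux_div_norm_lt (sub_ne_zero.mpr (hpne_lam z hz.le))
      have hid := aux_normSq_identity lam (p z)
      have h2 : (lam+1) * Complex.normSq (p z) - 2*lam*(p z).re < 0 := hlt_in z hz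
      nlinarith [mul_pos (show (0:ℝ) < lam - 1 by linarith)
        (show (0:ℝ) < -((lam+1) * Complex.normSq (p z) - 2*lam*(p z).re) by linarith)]
    have hWle : ∀ z : ℂ, ‖z‖ ≤ ‖z₀‖ → ‖W z‖ ≤ 1 := by
      intro z hz
      apply aux_div_norm_le (sub_ne_zero.mpr (hpne_lam z hz))
      have hid := aux_normSq_identity lam (p z)
      have h2 : (lam+1) * Complex.normSq (p z) - 2*lam*(p z).re ≤ 0 := hle_bd z hz
      nlinarith [mul_nonneg (show (0:ℝ) ≤ lam - 1 by linarith)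
        (show (0:ℝ) ≤ -((lam+1) * Complex.normSq (p z) - 2*lam*(p z).re) by linarith)]
    have hWz₀ : ‖W z₀‖ = 1 := by
      apply aux_div_norm_eq (sub_ne_zero.mpr (hpne_lam z₀ le_rfl))
      have hid := aux_normSq_identity lam (p z₀)
      have h2 : (lam+1) * Complex.normSq (p z₀) - 2*lam*(p z₀).re = 0 := hexpr00
      rw [h2, mul_zero] at hid
      linarith
    obtain ⟨K, hK1, hjack⟩ := jack hUopen hWdiff hr0 hsubU hW0 rfl hWlt hWle hWz₀
    -- compute at z₀
    set u : ℂ := W z₀ with hu_def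
    set P : ℂ := p z₀ with hP_def
    have hP0 : P ≠ 0 := hpne z₀ hz₀B
    have hPl : P ≠ (lam:ℂ) := hpne_lam z₀ le_rfl
    have hPlne : P - (lam:ℂ) ≠ 0 := sub_ne_zero.mpr hPl
    have husq : Complex.normSq u = 1 := by
      rw [← Complex.sq_norm, hWz₀]; norm_num
    have hlu : (lam:ℂ) - u ≠ 0 := by
      intro h
      rw [sub_eq_zero] at h
      have : ‖u‖ = lam := by
        rw [← h, Complex.norm_real, Real.norm_eq_abs, _root_.abs_of_pos (by linarith)]
      rw [hWz₀] at this
      linarith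
    have hu1 : u ≠ 1 := by
      intro h
      have he : (lam:ℂ)*(P-1)/(P-(lam:ℂ)) = 1 := h
      rw [div_eq_one_iff_eq hPlne] at he
      have : P * ((1:ℂ) - (lam:ℂ)) = 0 := by linear_combination -he
      rcases mul_eq_zero.mp this with h' | h'
      · exact hP0 h'
      · exact h1l h'
    have h1u : (1:ℂ) - u ≠ 0 := fun h => hu1 (by rwa [sub_eq_zero, eq_comm] at h)
    have hPu : P = (lam:ℂ)*(1-u)/((lam:ℂ)-u) :=
      (aux_inv lam (p z₀) hlam1 hPl).symm
    -- derivative of W at z₀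
    have hpd : DifferentiableAt ℂ p z₀ := hp.differentiableAt (isOpen_ball.mem_nhds hz₀B)
    have hdW : deriv W z₀ =
        ((lam:ℂ) * deriv p z₀ * (P - (lam:ℂ)) - (lam:ℂ)*(P-1) * deriv p z₀) / (P - (lam:ℂ))^2 := by
      rw [hW_def]
      rw [deriv_fun_div ((hpd.sub_const 1).const_mul _) (hpd.sub_const _) hPlne]
      rw [deriv_const_mul _ (hpd.sub_const 1), deriv_sub_const, deriv_sub_const]
    have hzD : (z₀ * deriv p z₀) * ((lam:ℂ)*(1-(lam:ℂ))) = K * u * (P - (lam:ℂ))^2 := by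
      have hj := hjack
      rw [hdW] at hj
      field_simp at hj
      linear_combination hj
    have hqz₀ := aux_alg lam K u P (z₀ * deriv p z₀) hlam1 hP0 hlu h1u hPu hzD
    have hql := hqlt z₀ hz₀B
    rw [hq z₀ hz₀B] at hql
    rw [hqz₀] at hql
    have := key_lower lam K u hlam1 hlam3 husq hu1 hK1 alpha halpha
    linarith
  -- construct the subordination function
  have hpneq : ∀ z ∈ ball (0:ℂ) 1, p z ≠ (lam:ℂ) := by
    intro z hz h
    have := hEneg z hz
    rw [hexpr_def] at this
    simp only [h, Complex.normSq_ofReal, Complex.ofReal_re] at this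
    nlinarith [mul_pos (mul_pos (show (0:ℝ)<lam by linarith) (show (0:ℝ)<lam by linarith))
      (show (0:ℝ)<lam-1 by linarith)]
  refine ⟨fun z => (lam:ℂ)*(p z - 1) / (p z - (lam:ℂ)), ?_, ?_, ?_, ?_⟩
  · apply DifferentiableOn.div
    · exact (hp.sub_const 1).const_mul _
    · exact hp.sub_const _
    · exact fun z hz => sub_ne_zero.mpr (hpneq z hz)
  · simp [hp0]
  · intro z hz
    rw [mem_ball_zero_iff]
    apply aux_div_norm_lt (sub_ne_zero.mpr (hpneq z hz))
    have hid := aux_normSq_identity lam (p z)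
    have h2 : (lam+1) * Complex.normSq (p z) - 2*lam*(p z).re < 0 := hEneg z hz
    nlinarith [mul_pos (show (0:ℝ) < lam - 1 by linarith)
      (show (0:ℝ) < -((lam+1) * Complex.normSq (p z) - 2*lam*(p z).re) by linarith)]
  · intro z hz hz0
    rw [hpval z hz hz0]
    exact (aux_inv lam (p z) hlam1 (hpneq z hz)).symm
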